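/- If the subalgebra system (ℂ ⊆ 𝒜, E), where 𝒜 = M_{n₀} ⊕ ⋯ ⊕ M_{n_{s-1}}, admits a unitary orthonormal basis, then E(X) = φ(X)·I where φ is the tracial state with trace vector given by the dimension vector, i.e. φ(⊕ᵢ Xᵢ) = (Σᵢ nᵢ tr(Xᵢ)) / (Σᵢ nᵢ²). -/

import Mathlib

open Finset Matrix
open scoped ComplexOrder

/-- If (ℂ ⊆ 𝒜, E) with 𝒜 = M_{n₀} ⊕ ⋯ ⊕ M_{n_{s-1}} and E(X) = ψ(X)·I for a
state ψ admits a unitary orthonormal basis, then ψ is the tracial state with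
trace vector the dimension vector: ψ(⊕ᵢ Xᵢ) = (∑ᵢ nᵢ tr Xᵢ)/(∑ᵢ nᵢ²). -/
theorem state_of_unitary_onb
    (s : ℕ) (hs : 0 < s) (n : Fin s → ℕ) (hn : ∀ i, 0 < n i)
    (ψ : (∀ i, Matrix (Fin (n i)) (Fin (n i)) ℂ) →ₗ[ℂ] ℂ)
    (hunital : ψ 1 = 1)
    (hpos : ∀ X, 0 ≤ ψ (star X * X))
    (d : ℕ) (W : Fin d → ∀ i, Matrix (Fin (n i)) (Fin (n i)) ℂ)
    (hWu : ∀ t, W t ∈ unitary (∀ i, Matrix (Fin (n i)) (Fin (n i)) ℂ))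
    (horth : ∀ t t', ψ (star (W t) * W t') = if t = t' then 1 else 0)
    (hbasis : ∀ X, X = ∑ t, ψ (star (W t) * X) • W t) :
    ∀ X, ψ X = (∑ i, (n i : ℂ) * Matrix.trace (X i)) / (∑ i, (n i : ℂ) ^ 2) := by
  classical
  set c : ∀ i : Fin s, Fin (n i) → Fin (n i) → ℂ :=
    fun i p q => ψ (Pi.single i (Matrix.single p q (1:ℂ))) with hc
  -- decomposition of an arbitrary element into matrix units
  have hdec : ∀ Y : ∀ i, Matrix (Fin (n i)) (Fin (n i)) ℂ,
      Y = ∑ i, ∑ p, ∑ q, Y i p q •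
        (Pi.single i (Matrix.single p q (1:ℂ)) :
          ∀ j, Matrix (Fin (n j)) (Fin (n j)) ℂ) := by
    intro Y
    funext j
    simp only [Finset.sum_apply, Pi.smul_apply]
    rw [Finset.sum_eq_single_of_mem j (Finset.mem_univ j)]
    · simp only [Pi.single_eq_same, smul_single, smul_eq_mul, mul_one]
      exact Matrix.matrix_eq_sum_single (Y j)
    · intro i _ hij
      simp [Pi.single_eq_of_ne hij.symm]
  -- ψ in terms of the coefficients c
  have hL : ∀ Y, ψ Y = ∑ i, ∑ p, ∑ q, Y i p q * c i p q := by
    intro Y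
    conv_lhs => rw [hdec Y]
    simp only [map_sum, _root_.map_smul, smul_eq_mul, hc]
  -- unitarity, entrywise
  have hU : ∀ (t : Fin d) (i : Fin s) (p b : Fin (n i)),
      (∑ a, star (W t i a p) * W t i a b) = if p = b then (1:ℂ) else 0 := by
    intro t i p b
    have h1 : star (W t) * W t = 1 := (hWu t).1
    have h2 : (star (W t) * W t) i p b = (1 : ∀ j, Matrix (Fin (n j)) (Fin (n j)) ℂ) i p b := by
      rw [h1]
    simpa [Pi.mul_apply, Pi.star_apply, Matrix.mul_apply, Matrix.star_eq_conjTranspose,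
      Matrix.conjTranspose_apply, Matrix.one_apply] using h2
  -- the expansion coefficient of a matrix unit
  have hcoef : ∀ (t : Fin d) (i : Fin s) (k l : Fin (n i)),
      ψ (star (W t) * Pi.single i (Matrix.single k l (1:ℂ))) =
        ∑ p, star (W t i k p) * c i p l := by
    intro t i k l
    rw [hL]
    rw [Finset.sum_eq_single_of_mem i (Finset.mem_univ i)]
    · have hentry : ∀ p q : Fin (n i),
          (star (W t) * (Pi.single i (Matrix.single k l (1:ℂ)) :
            ∀ j, Matrix (Fin (n j)) (Fin (n j)) ℂ)) i p q
            = star (W t i k p) * (if l = q then (1:ℂ) else 0) := by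
        intro p q
        rw [Pi.mul_apply, Pi.star_apply, Pi.single_eq_same, Matrix.mul_apply]
        rw [Finset.sum_eq_single_of_mem k (Finset.mem_univ k)]
        · simp [Matrix.star_eq_conjTranspose, Matrix.conjTranspose_apply,
            Matrix.single, Matrix.of_apply]
        · intro m _ hmk
          simp [Matrix.single, Matrix.of_apply, Ne.symm hmk]
      simp only [hentry]
      refine Finset.sum_congr rfl fun p _ => ?_
      simp [mul_ite, mul_one, mul_zero, ite_mul, zero_mul, Finset.sum_ite_eq]
    · intro j _ hji
      have hz : (star (W t) * (Pi.single i (Matrix.single k l (1:ℂ)) :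
            ∀ j', Matrix (Fin (n j')) (Fin (n j')) ℂ)) j = 0 := by
        rw [Pi.mul_apply, Pi.single_eq_of_ne hji, mul_zero]
      simp [hz]
  -- the key identity
  have hK : ∀ (i : Fin s) (b l : Fin (n i)),
      (d : ℂ) * c i b l = if l = b then (n i : ℂ) else 0 := by
    intro i b l
    have key : ∀ a : Fin (n i),
        (if l = b then (1:ℂ) else 0) =
          ∑ t, (∑ p, star (W t i a p) * c i p l) * W t i a b := by
      intro a
      have h0 := hbasis (Pi.single i (Matrix.single a l (1:ℂ)))
      have h1 : (Pi.single i (Matrix.single a l (1:ℂ)) :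
            ∀ j, Matrix (Fin (n j)) (Fin (n j)) ℂ) i a b
          = (∑ t, ψ (star (W t) * Pi.single i (Matrix.single a l (1:ℂ))) • W t) i a b := by
        rw [← h0]
      simp only [Finset.sum_apply, Pi.smul_apply, Matrix.sum_apply, Matrix.smul_apply,
        smul_eq_mul, Pi.single_eq_same, hcoef] at h1
      simpa [Matrix.single, Matrix.of_apply] using h1
    symm
    calc (if l = b then (n i : ℂ) else 0)
        = ∑ _a : Fin (n i), (if l = b then (1:ℂ) else 0) := by
          split_ifs <;> simp
      _ = ∑ a : Fin (n i), ∑ t, (∑ p, star (W t i a p) * c i p l) * W t i a b :=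
          Finset.sum_congr rfl fun a _ => key a
      _ = ∑ t, ∑ p, c i p l * ∑ a, star (W t i a p) * W t i a b := by
          rw [Finset.sum_comm]
          refine Finset.sum_congr rfl fun t _ => ?_
          simp only [Finset.sum_mul, Finset.mul_sum]
          rw [Finset.sum_comm]
          exact Finset.sum_congr rfl fun p _ => Finset.sum_congr rfl fun a _ => by ring
      _ = ∑ t, ∑ p, c i p l * (if p = b then (1:ℂ) else 0) := by
          refine Finset.sum_congr rfl fun t _ => Finset.sum_congr rfl fun p _ => ?_
          rw [hU]
      _ = ∑ _t : Fin d, c i b l := by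
          refine Finset.sum_congr rfl fun t _ => ?_
          simp [mul_ite, mul_one, mul_zero, Finset.sum_ite_eq']
      _ = (d : ℂ) * c i b l := by
          simp [Finset.sum_const, Finset.card_univ, nsmul_eq_mul]
  -- d is nonzero
  have hd : (d : ℂ) ≠ 0 := by
    have h0 := hK ⟨0, hs⟩ ⟨0, hn ⟨0, hs⟩⟩ ⟨0, hn ⟨0, hs⟩⟩
    rw [if_pos rfl] at h0
    intro h
    rw [h, zero_mul] at h0
    exact (hn ⟨0, hs⟩).ne' (by exact_mod_cast h0.symm)
  have hcval : ∀ (i : Fin s) (b l : Fin (n i)),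
      c i b l = (if l = b then (n i : ℂ) else 0) / d := by
    intro i b l
    rw [eq_div_iff hd, mul_comm]
    exact hK i b l
  -- ψ as a weighted trace
  have hpsi : ∀ X, ψ X = (∑ i, (n i : ℂ) * Matrix.trace (X i)) / d := by
    intro X
    rw [hL]
    calc ∑ i, ∑ p, ∑ q, X i p q * c i p q
        = ∑ i, ∑ p, ∑ q, X i p q * ((if q = p then (n i : ℂ) else 0) / d) := by
          simp only [hcval]
      _ = ∑ i, ∑ p, X i p p * ((n i : ℂ) / d) := by
          refine Finset.sum_congr rfl fun i _ => Finset.sum_congr rfl fun p _ => ?_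
          simp [apply_ite (· / (d:ℂ)), zero_div, mul_ite, mul_zero, Finset.sum_ite_eq']
      _ = (∑ i, (n i : ℂ) * Matrix.trace (X i)) / d := by
          rw [Finset.sum_div]
          refine Finset.sum_congr rfl fun i _ => ?_
          simp only [Matrix.trace, Matrix.diag, Finset.mul_sum, Finset.sum_div]
          exact Finset.sum_congr rfl fun p _ => by ring
  -- identify d with ∑ nᵢ²
  have hd2 : (∑ i, (n i : ℂ) ^ 2) = (d : ℂ) := by
    have h1 := hpsi 1
    rw [hunital] at h1
    have h2 : ∀ i : Fin s,
        Matrix.trace ((1 : ∀ j, Matrix (Fin (n j)) (Fin (n j)) ℂ) i) = (n i : ℂ) := by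
      intro i
      simp [Pi.one_apply, Matrix.trace_one]
    simp only [h2] at h1
    have h3 : (∑ i, (n i : ℂ) * (n i : ℂ)) = (d : ℂ) := by
      field_simp at h1
      simpa only [sq] using h1.symm
    rw [← h3]
    exact Finset.sum_congr rfl fun i _ => by ring
  intro X
  rw [hpsi X, hd2]
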